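/- Let M be a probability measure of the form ν(dJ) μ_J on pairs (J,σ) with σ ∈ 𝒢(J), satisfying the monotonicity property. Let e be an edge and A ⊆ ℝ^E × {σ : σ_e = +1} a measurable event such that (J,σ) ∈ A implies (J(e,s),σ) ∈ A for all s ≥ J_e. Then for every λ ∈ ℝ, M(A ∩ {J_e ≥ λ}) ≥ (1/2) ν([λ,∞)) M(A). -/

import Mathlib

open scoped BigOperators ENNReal
open MeasureTheory

noncomputable def spin (b : Bool) : ℝ := if b then 1 else -1

noncomputable def boundaryEnergy {V : Type*} [DecidableEq V] (G : SimpleGraph V)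
    [G.LocallyFinite] (J : V → V → ℝ) (σ : V → Bool) (A : Finset V) : ℝ :=
  ∑ x ∈ A, ∑ y ∈ (G.neighborFinset x).filter (fun y => y ∉ A),
    J x y * spin (σ x) * spin (σ y)

def IsGroundState {V : Type*} [DecidableEq V] (G : SimpleGraph V) [G.LocallyFinite]
    (J : V → V → ℝ) (σ : V → Bool) : Prop :=
  ∀ A : Finset V, 0 ≤ boundaryEnergy G J σ A

noncomputable def updateCoupling {V : Type*} [DecidableEq V] (J : V → V → ℝ) (u v : V)
    (y : ℝ) : V → V → ℝ :=
  fun x z => if s(x, z) = s(u, v) then y else J x z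

section AuxLemmas

variable {α β : Type*} [MeasurableSpace α] [MeasurableSpace β]

/-- For a product with a probability measure in the second factor, the lower integral of a
(not necessarily measurable) function of the first coordinate is at most its lower integral. -/
lemma aux_lintegral_fst_le (μ : Measure α) (ν : Measure β) [SFinite ν]
    [IsProbabilityMeasure ν] (f : α → ℝ≥0∞) :
    ∫⁻ p, f p.1 ∂(μ.prod ν) ≤ ∫⁻ a, f a ∂μ := by
  obtain ⟨φ, hφm, hφle, hφeq⟩ :=
    exists_measurable_le_lintegral_eq (μ := μ.prod ν) (fun p => f p.1)
  rw [hφeq, lintegral_prod _ hφm.aemeasurable]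
  refine lintegral_mono fun a => ?_
  calc ∫⁻ y, φ (a, y) ∂ν ≤ ∫⁻ _, f a ∂ν := lintegral_mono fun y => hφle (a, y)
    _ = f a := by simp

/-- For a measure preserving map which is almost everywhere an involution, the lower integral
of `f ∘ Φ` is at most that of `f`, for an arbitrary function `f`. -/
lemma aux_lintegral_comp_le {μ : Measure α} {Φ : α → α}
    (hΦ : MeasurePreserving Φ μ μ) (hinv : ∀ᵐ x ∂μ, Φ (Φ x) = x) (f : α → ℝ≥0∞) :
    ∫⁻ x, f (Φ x) ∂μ ≤ ∫⁻ x, f x ∂μ := by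
  obtain ⟨φ, hφm, hφle, hφeq⟩ :=
    exists_measurable_le_lintegral_eq (μ := μ) (fun x => f (Φ x))
  rw [hφeq, ← hΦ.lintegral_comp hφm]
  refine lintegral_mono_ae ?_
  filter_upwards [hinv] with x hx
  calc φ (Φ x) ≤ f (Φ (Φ x)) := hφle (Φ x)
    _ = f x := by rw [hx]

/-- The key "one-half" estimate on a product space: if `N` is a (not necessarily measurable)
function which is monotone in the second (real) variable, then the integral of `N` restricted
to `{lam ≤ y}` is at least `(1/2) ν([lam,∞))` times the full integral. -/
lemma aux_half_tail (μ : Measure α) (ν : Measure ℝ) [SFinite μ] [IsProbabilityMeasure ν]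
    (lam : ℝ) (N : α × ℝ → ℝ≥0∞) (hmono : ∀ a, Monotone fun y => N (a, y)) :
    (1 / 2 : ℝ≥0∞) * ν (Set.Ici lam) * ∫⁻ z, N z ∂(μ.prod ν) ≤
      ∫⁻ z, (if lam ≤ z.2 then N z else 0) ∂(μ.prod ν) := by
  obtain ⟨w, hwm, hwle, hweq⟩ := exists_measurable_le_lintegral_eq (μ := μ.prod ν) N
  set p := ν (Set.Ici lam) with hp
  set q := ν (Set.Iio lam) with hq
  have hsetlt : MeasurableSet {z : α × ℝ | z.2 < lam} :=
    measurableSet_lt measurable_snd measurable_const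
  have hsetle : MeasurableSet {z : α × ℝ | lam ≤ z.2} :=
    measurableSet_le measurable_const measurable_snd
  set wlow : α × ℝ → ℝ≥0∞ := fun z => if z.2 < lam then w z else 0 with hwlowdef
  set whigh : α × ℝ → ℝ≥0∞ := fun z => if lam ≤ z.2 then w z else 0 with hwhighdef
  have hwlow : Measurable wlow := Measurable.ite hsetlt hwm measurable_const
  have hwhigh : Measurable whigh := Measurable.ite hsetle hwm measurable_const
  set E : α → ℝ≥0∞ := fun a => ∫⁻ y, wlow (a, y) ∂ν with hEdef
  set E' : α → ℝ≥0∞ := fun a => ∫⁻ y, whigh (a, y) ∂ν with hE'def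
  have hE : Measurable E := hwlow.lintegral_prod_right'
  have hE' : Measurable E' := hwhigh.lintegral_prod_right'
  set w2 : α × ℝ → ℝ≥0∞ := fun z => if lam ≤ z.2 then E z.1 / q else 0 with hw2def
  have hw2 : Measurable w2 :=
    Measurable.ite hsetle ((hE.comp measurable_fst).div measurable_const) measurable_const
  set W : α × ℝ → ℝ≥0∞ := fun z => max (whigh z) (w2 z) with hWdef
  have hW : Measurable W := hwhigh.max hw2
  -- `W` is below the target integrand
  have hWle : ∀ z, W z ≤ (if lam ≤ z.2 then N z else 0) := by
    rintro ⟨a, y⟩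
    by_cases h : lam ≤ y
    · simp only [hWdef, hwhighdef, hw2def, h, if_true, max_le_iff]
      constructor
      · exact hwle (a, y)
      · have h1 : E a ≤ N (a, y) * q := by
          have hb : ∀ y', wlow (a, y') ≤ (Set.Iio lam).indicator (fun _ => N (a, y)) y' := by
            intro y'
            by_cases h' : y' < lam
            · simp only [hwlowdef, h', if_true, Set.indicator_of_mem (Set.mem_Iio.2 h')]
              exact (hwle (a, y')).trans (hmono a (le_of_lt (lt_of_lt_of_le h' h)))
            · simp only [hwlowdef, h', if_false]
              exact zero_le
          calc E a ≤ ∫⁻ y', (Set.Iio lam).indicator (fun _ => N (a, y)) y' ∂ν :=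
                lintegral_mono hb
            _ = N (a, y) * q := lintegral_indicator_const measurableSet_Iio _
        exact ENNReal.div_le_of_le_mul h1
    · simp [hWdef, hwhighdef, hw2def, h]
  -- fiberwise computations
  have hfib_w : ∀ a, ∫⁻ y, w (a, y) ∂ν = E a + E' a := by
    intro a
    calc ∫⁻ y, w (a, y) ∂ν = ∫⁻ y, (wlow (a, y) + whigh (a, y)) ∂ν := by
          refine lintegral_congr fun y => ?_
          by_cases h : y < lam
          · simp [hwlowdef, hwhighdef, h, not_le.2 h]
          · simp [hwlowdef, hwhighdef, h, not_lt.1 h]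
      _ = E a + E' a :=
          lintegral_add_left (hwlow.comp measurable_prodMk_left) _
  have hfib_w2 : ∀ a, ∫⁻ y, w2 (a, y) ∂ν = E a / q * p := by
    intro a
    have hb : ∀ y, w2 (a, y) = (Set.Ici lam).indicator (fun _ => E a / q) y := by
      intro y
      by_cases h : lam ≤ y <;> simp [hw2def, h, Set.indicator_apply, Set.mem_Ici]
    rw [lintegral_congr hb, lintegral_indicator_const measurableSet_Ici]
  -- the key pointwise (in `a`) estimate
  have key : ∀ a, (1 / 2 : ℝ≥0∞) * p * (E a + E' a) ≤ ∫⁻ y, W (a, y) ∂ν := by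
    intro a
    have hq1 : q ≤ 1 := prob_le_one
    have hp1 : p ≤ 1 := prob_le_one
    have hEq : E a ≤ E a / q := by
      have h := ENNReal.div_le_div_left hq1 (E a)
      rwa [div_one] at h
    have h2 : p * E a ≤ ∫⁻ y, W (a, y) ∂ν := by
      calc p * E a ≤ p * (E a / q) := mul_le_mul_right hEq p
        _ = E a / q * p := mul_comm _ _
        _ = ∫⁻ y, w2 (a, y) ∂ν := (hfib_w2 a).symm
        _ ≤ ∫⁻ y, W (a, y) ∂ν := lintegral_mono fun y => le_max_right _ _
    have h3 : p * E' a ≤ ∫⁻ y, W (a, y) ∂ν := by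
      calc p * E' a ≤ 1 * E' a := mul_le_mul_left hp1 _
        _ = E' a := one_mul _
        _ ≤ ∫⁻ y, W (a, y) ∂ν := lintegral_mono fun y => le_max_left _ _
    calc (1 / 2 : ℝ≥0∞) * p * (E a + E' a)
        = (1 / 2 : ℝ≥0∞) * (p * E a) + (1 / 2 : ℝ≥0∞) * (p * E' a) := by
          rw [mul_assoc, mul_add, mul_add]
      _ ≤ (1 / 2 : ℝ≥0∞) * (∫⁻ y, W (a, y) ∂ν) + (1 / 2 : ℝ≥0∞) * (∫⁻ y, W (a, y) ∂ν) :=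
          add_le_add (mul_le_mul_right h2 _) (mul_le_mul_right h3 _)
      _ = ∫⁻ y, W (a, y) ∂ν := by
          rw [← add_mul, show (1 / 2 + 1 / 2 : ℝ≥0∞) = 1 from ENNReal.add_halves 1, one_mul]
  -- put everything together
  calc (1 / 2 : ℝ≥0∞) * p * ∫⁻ z, N z ∂(μ.prod ν)
      = (1 / 2 : ℝ≥0∞) * p * ∫⁻ z, w z ∂(μ.prod ν) := by rw [hweq]
    _ = (1 / 2 : ℝ≥0∞) * p * ∫⁻ a, (E a + E' a) ∂μ := by
        rw [lintegral_prod _ hwm.aemeasurable]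
        congr 1
        exact lintegral_congr hfib_w
    _ = ∫⁻ a, (1 / 2 : ℝ≥0∞) * p * (E a + E' a) ∂μ :=
        (lintegral_const_mul _ (hE.add hE')).symm
    _ ≤ ∫⁻ a, ∫⁻ y, W (a, y) ∂ν ∂μ := lintegral_mono key
    _ = ∫⁻ z, W z ∂(μ.prod ν) := (lintegral_prod _ hW.aemeasurable).symm
    _ ≤ ∫⁻ z, (if lam ≤ z.2 then N z else 0) ∂(μ.prod ν) := lintegral_mono hWle

end AuxLemmas

/-- Lemma on coupling modification: let `M = ν(dJ) μ_J` with `μ_J` probability measures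
supported on ground states satisfying the monotonicity property, `ν` a product measure
whose coordinate at the edge `e = {u,v}` is independent with marginal `ν_e`, and let
`A ⊆ ℝ^E × {σ_e = +1}` be an event stable under raising the coupling at `e`.  Then
`M(A ∩ {J_e ≥ λ}) ≥ (1/2) ν_e([λ,∞)) M(A)`. -/
theorem coupling_raise_estimate {V : Type*} [DecidableEq V] (G : SimpleGraph V)
    [G.LocallyFinite] (u v : V) (huv : G.Adj u v)
    (ν : Measure (V → V → ℝ)) [IsProbabilityMeasure ν]
    (νe : Measure ℝ) [IsProbabilityMeasure νe]
    (hprod : MeasurePreserving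
      (fun p : (V → V → ℝ) × ℝ => updateCoupling p.1 u v p.2) (ν.prod νe) ν)
    (μ : (V → V → ℝ) → Measure (V → Bool)) (hμprob : ∀ J, IsProbabilityMeasure (μ J))
    (hsupp : ∀ J, μ J {σ | ¬ IsGroundState G J σ} = 0)
    (hmono : ∀ J : V → V → ℝ, ∀ y : ℝ, J u v ≤ y → ∀ B : Set (V → Bool),
      (∀ σ ∈ B, spin (σ u) * spin (σ v) = 1) → μ J B ≤ μ (updateCoupling J u v y) B)
    (A : Set ((V → V → ℝ) × (V → Bool))) (hA : MeasurableSet A)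
    (hAspin : ∀ p ∈ A, spin (p.2 u) * spin (p.2 v) = 1)
    (hAraise : ∀ p ∈ A, ∀ s : ℝ, p.1 u v ≤ s → (updateCoupling p.1 u v s, p.2) ∈ A)
    (lam : ℝ) :
    (1 / 2 : ℝ≥0∞) * νe (Set.Ici lam) * (∫⁻ J, μ J {σ | (J, σ) ∈ A} ∂ν) ≤
      ∫⁻ J in {J : V → V → ℝ | lam ≤ J u v}, μ J {σ | (J, σ) ∈ A} ∂ν := by
  classical
  -- basic facts about `updateCoupling`
  have hupd_uv : ∀ (J : V → V → ℝ) (y : ℝ), updateCoupling J u v y u v = y := by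
    intro J y; simp [updateCoupling]
  have hupd_vu : ∀ (J : V → V → ℝ) (y : ℝ), updateCoupling J u v y v u = y := by
    intro J y; simp [updateCoupling, Sym2.eq_swap]
  have hupd_upd : ∀ (J : V → V → ℝ) (y y' : ℝ),
      updateCoupling (updateCoupling J u v y) u v y' = updateCoupling J u v y' := by
    intro J y y'; funext x z
    by_cases h : s(x, z) = s(u, v) <;> simp [updateCoupling, h]
  have hupd_self : ∀ J : V → V → ℝ, J u v = J v u → updateCoupling J u v (J u v) = J := by
    intro J hJ; funext x z
    by_cases h : s(x, z) = s(u, v)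
    · rcases Sym2.eq_iff.1 h with ⟨hx, hz⟩ | ⟨hx, hz⟩
      · subst hx; subst hz; simp [updateCoupling, h]
      · subst hx; subst hz
        simp only [updateCoupling, h, if_true]
        exact hJ
    · simp [updateCoupling, h]
  -- notation
  set T : (V → V → ℝ) × ℝ → (V → V → ℝ) := fun p => updateCoupling p.1 u v p.2 with hTdef
  have hT : Measurable T := hprod.measurable
  set F : (V → V → ℝ) → ℝ≥0∞ := fun J => μ J {σ | (J, σ) ∈ A} with hFdef
  set S : Set (V → V → ℝ) := {J : V → V → ℝ | lam ≤ J u v} with hSdef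
  have hev : Measurable fun J : V → V → ℝ => J u v :=
    (measurable_pi_apply v).comp (measurable_pi_apply u)
  have hev' : Measurable fun J : V → V → ℝ => J v u :=
    (measurable_pi_apply u).comp (measurable_pi_apply v)
  have hSm : MeasurableSet S := measurableSet_le measurable_const hev
  -- monotonicity of `F (T (J, y))` in `y`
  have hFTmono : ∀ J : V → V → ℝ, Monotone fun y => F (T (J, y)) := by
    intro J y y' hyy'
    show μ (updateCoupling J u v y) {σ | (updateCoupling J u v y, σ) ∈ A} ≤
      μ (updateCoupling J u v y') {σ | (updateCoupling J u v y', σ) ∈ A}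
    have hsub : {σ | (updateCoupling J u v y, σ) ∈ A} ⊆
        {σ | (updateCoupling J u v y', σ) ∈ A} := by
      intro σ hσ
      have h : (updateCoupling (updateCoupling J u v y) u v y', σ) ∈ A :=
        hAraise (updateCoupling J u v y, σ) hσ y'
          (by show updateCoupling J u v y u v ≤ y'; rw [hupd_uv]; exact hyy')
      rwa [hupd_upd] at h
    calc μ (updateCoupling J u v y) {σ | (updateCoupling J u v y, σ) ∈ A}
        ≤ μ (updateCoupling J u v y) {σ | (updateCoupling J u v y', σ) ∈ A} :=
          measure_mono hsub
      _ ≤ μ (updateCoupling (updateCoupling J u v y) u v y')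
            {σ | (updateCoupling J u v y', σ) ∈ A} := by
          refine hmono (updateCoupling J u v y) y' ?_ _ ?_
          · rw [hupd_uv J y]; exact hyy'
          · intro σ hσ; exact hAspin (updateCoupling J u v y', σ) hσ
      _ = μ (updateCoupling J u v y') {σ | (updateCoupling J u v y', σ) ∈ A} := by
          rw [hupd_upd]
  -- the auxiliary involution `Φ`
  set Φ : (V → V → ℝ) × ℝ → (V → V → ℝ) × ℝ := fun z => (T z, z.1 u v) with hΦdef
  have hΦmeas : Measurable Φ := hT.prodMk (hev.comp measurable_fst)
  -- `Φ` is measure preserving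
  have hα : MeasurePreserving (Prod.map T id) ((ν.prod νe).prod νe) (ν.prod νe) :=
    hprod.prod (MeasurePreserving.id νe)
  have hγ : MeasurePreserving (fun q : ((V → V → ℝ) × ℝ) × ℝ => ((q.1.1, q.2), q.1.2))
      ((ν.prod νe).prod νe) ((ν.prod νe).prod νe) := by
    have h1 := measurePreserving_prodAssoc ν νe νe
    have h2 : MeasurePreserving (Prod.map (id : (V → V → ℝ) → V → V → ℝ)
        (Prod.swap : ℝ × ℝ → ℝ × ℝ)) (ν.prod (νe.prod νe)) (ν.prod (νe.prod νe)) :=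
      (MeasurePreserving.id ν).prod Measure.measurePreserving_swap
    have h3 := MeasurePreserving.symm MeasurableEquiv.prodAssoc
      (measurePreserving_prodAssoc ν νe νe)
    have hcomp := h3.comp (h2.comp h1)
    have hfun : ((⇑(MeasurableEquiv.prodAssoc :
          ((V → V → ℝ) × ℝ) × ℝ ≃ᵐ (V → V → ℝ) × ℝ × ℝ).symm) ∘
          ((Prod.map (id : (V → V → ℝ) → V → V → ℝ) (Prod.swap : ℝ × ℝ → ℝ × ℝ)) ∘
            ⇑(MeasurableEquiv.prodAssoc :
          ((V → V → ℝ) × ℝ) × ℝ ≃ᵐ (V → V → ℝ) × ℝ × ℝ))) =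
        (fun q : ((V → V → ℝ) × ℝ) × ℝ => ((q.1.1, q.2), q.1.2)) := by
      funext q
      obtain ⟨⟨J, t⟩, y⟩ := q
      rfl
    rwa [hfun] at hcomp
  have hΦcompα : Φ ∘ (Prod.map T id) =
      (Prod.map T id) ∘ (fun q : ((V → V → ℝ) × ℝ) × ℝ => ((q.1.1, q.2), q.1.2)) := by
    funext q
    obtain ⟨⟨J, t⟩, y⟩ := q
    show (updateCoupling (updateCoupling J u v t) u v y, updateCoupling J u v t u v)
        = (updateCoupling J u v y, t)
    rw [hupd_upd, hupd_uv]
  have hΦ : MeasurePreserving Φ (ν.prod νe) (ν.prod νe) := by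
    refine ⟨hΦmeas, ?_⟩
    have h1 : Measure.map (Prod.map T id) ((ν.prod νe).prod νe) = ν.prod νe := hα.map_eq
    calc Measure.map Φ (ν.prod νe)
        = Measure.map Φ (Measure.map (Prod.map T id) ((ν.prod νe).prod νe)) := by rw [h1]
      _ = Measure.map (Φ ∘ Prod.map T id) ((ν.prod νe).prod νe) :=
          Measure.map_map hΦmeas hα.measurable
      _ = Measure.map ((Prod.map T id) ∘
            (fun q : ((V → V → ℝ) × ℝ) × ℝ => ((q.1.1, q.2), q.1.2)))
            ((ν.prod νe).prod νe) := by rw [hΦcompα]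
      _ = Measure.map (Prod.map T id)
            (Measure.map (fun q : ((V → V → ℝ) × ℝ) × ℝ => ((q.1.1, q.2), q.1.2))
              ((ν.prod νe).prod νe)) :=
          (Measure.map_map hα.measurable hγ.measurable).symm
      _ = Measure.map (Prod.map T id) ((ν.prod νe).prod νe) := by rw [hγ.map_eq]
      _ = ν.prod νe := h1
  -- `Φ` is almost everywhere an involution
  have hbadm : MeasurableSet {J : V → V → ℝ | ¬ J u v = J v u} :=
    (measurableSet_eq_fun hev hev').compl
  have hbad0 : ν {J : V → V → ℝ | ¬ J u v = J v u} = 0 := by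
    rw [← hprod.map_eq, Measure.map_apply hprod.measurable hbadm]
    have hpre : (fun p : (V → V → ℝ) × ℝ => updateCoupling p.1 u v p.2) ⁻¹'
        {J : V → V → ℝ | ¬ J u v = J v u} = ∅ := by
      ext p
      simp [hupd_uv, hupd_vu]
    rw [hpre]
    exact measure_empty
  have hinv : ∀ᵐ z ∂(ν.prod νe), Φ (Φ z) = z := by
    rw [ae_iff]
    have hsub : {z : (V → V → ℝ) × ℝ | ¬ Φ (Φ z) = z} ⊆
        Prod.fst ⁻¹' {J : V → V → ℝ | ¬ J u v = J v u} := by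
      intro z hz
      simp only [Set.mem_setOf_eq] at hz
      simp only [Set.mem_preimage, Set.mem_setOf_eq]
      intro hgood
      apply hz
      obtain ⟨J, y⟩ := z
      refine Prod.ext ?_ ?_
      · show updateCoupling (updateCoupling J u v y) u v (J u v) = J
        rw [hupd_upd]
        exact hupd_self J hgood
      · show updateCoupling J u v y u v = y
        exact hupd_uv J y
    have h0 : (ν.prod νe) (Prod.fst ⁻¹' {J : V → V → ℝ | ¬ J u v = J v u}) = 0 := by
      have hpre : Prod.fst ⁻¹' {J : V → V → ℝ | ¬ J u v = J v u} =
          {J : V → V → ℝ | ¬ J u v = J v u} ×ˢ (Set.univ : Set ℝ) := by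
        ext ⟨J, y⟩; simp
      rw [hpre, Measure.prod_prod, hbad0, zero_mul]
    exact measure_mono_null hsub h0
  -- Step 1 : push the integral to the product space
  have step1 : ∫⁻ J, F J ∂ν ≤ ∫⁻ z, F (T z) ∂(ν.prod νe) := by
    calc ∫⁻ J, F J ∂ν = ∫⁻ J, F J ∂(Measure.map T (ν.prod νe)) := by rw [hprod.map_eq]
      _ ≤ ∫⁻ z, F (T z) ∂(ν.prod νe) := lintegral_map_le F T
  -- Step 2 : the half-tail estimate on the product space
  have step2 := aux_half_tail ν νe lam (fun z => F (T z)) hFTmono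
  -- Step 3 : rewrite the restricted integrand via the indicator of `S`
  have step3 : ∫⁻ z, (if lam ≤ z.2 then F (T z) else 0) ∂(ν.prod νe)
      = ∫⁻ z, S.indicator F (T z) ∂(ν.prod νe) := by
    refine lintegral_congr fun z => ?_
    have hmem : T z ∈ S ↔ lam ≤ z.2 := by
      simp only [hSdef, hTdef, Set.mem_setOf_eq, hupd_uv]
    by_cases h : lam ≤ z.2
    · rw [if_pos h, Set.indicator_of_mem (hmem.2 h)]
    · rw [if_neg h, Set.indicator_of_notMem (fun hc => h (hmem.1 hc))]
  -- Step 4 : use the involution to remove the coupling update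
  have step4 : ∫⁻ z, S.indicator F (T z) ∂(ν.prod νe) ≤
      ∫⁻ z : (V → V → ℝ) × ℝ, S.indicator F z.1 ∂(ν.prod νe) :=
    aux_lintegral_comp_le hΦ hinv (fun z => S.indicator F z.1)
  -- Step 5 : project back to the first coordinate
  have step5 : ∫⁻ z : (V → V → ℝ) × ℝ, S.indicator F z.1 ∂(ν.prod νe) ≤
      ∫⁻ J, S.indicator F J ∂ν := aux_lintegral_fst_le ν νe _
  -- put everything together
  calc (1 / 2 : ℝ≥0∞) * νe (Set.Ici lam) * ∫⁻ J, F J ∂ν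
      ≤ (1 / 2 : ℝ≥0∞) * νe (Set.Ici lam) * ∫⁻ z, F (T z) ∂(ν.prod νe) :=
        mul_le_mul_right step1 _
    _ ≤ ∫⁻ z, (if lam ≤ z.2 then F (T z) else 0) ∂(ν.prod νe) := step2
    _ = ∫⁻ z, S.indicator F (T z) ∂(ν.prod νe) := step3
    _ ≤ ∫⁻ z : (V → V → ℝ) × ℝ, S.indicator F z.1 ∂(ν.prod νe) := step4
    _ ≤ ∫⁻ J, S.indicator F J ∂ν := step5
    _ = ∫⁻ J in S, F J ∂ν := lintegral_indicator hSm F
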